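/- arXiv:1106.0356 — 2 statements merged into one kernel-verified Lean document; each statement's English description precedes it below -/
import Mathlib

section
/- Let $a>0$ and let $(a_n)_{n\ge 0}$ be a complex sequence with $|a_n - a| \le c_0|g_0|$ for all $n$, where $g_0\in\mathbb{C}$ satisfies $|g_0|<\varepsilon$ and $|\mathrm{Arg}(g_0)|\le \pi-\delta$ for some $\delta\in(0,\pi/2)$. Define $A_n = \frac{1}{n}\sum_{k=0}^{n-1} a_k$ and $\tilde g_n = g_0/(1+g_0 n A_n)$. Then there exists $\varepsilon_0(\delta)>0$ such that if $\varepsilon\le\varepsilon_0(\delta)$ and additionally $c_0\varepsilon \le a/2$, then for all $n\ge 0$ the denominator $1+g_0 n A_n$ is nonzero, $|\tilde g_n| \le 2\varepsilon/\sin\delta$, and $|\mathrm{Arg}(\tilde g_n)| \le \pi - \delta/2$. -/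
open Real

lemma J_le_abs (γ : ℝ) (z : ℂ) :
    z.re * Real.sin γ + z.im * Real.cos γ ≤ ‖z‖ := by
  nlinarith [Complex.sq_norm z, norm_nonneg z,
    sq_nonneg (z.re * Real.cos γ - z.im * Real.sin γ),
    Real.sin_sq_add_cos_sq γ, Complex.normSq_apply z]

lemma J_eq (γ : ℝ) (z : ℂ) (hz : z ≠ 0) :
    z.re * Real.sin γ + z.im * Real.cos γ = ‖z‖ * Real.sin (z.arg + γ) := by
  have habs : ‖z‖ ≠ 0 := norm_ne_zero_iff.mpr hz
  rw [Real.sin_add, Complex.cos_arg hz, Complex.sin_arg]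
  field_simp
  ring

lemma sin_ge_sin (γ x : ℝ) (h1 : 0 < γ) (hγ : γ ≤ π / 2) (h2 : γ ≤ x) (h3 : x ≤ π - γ) :
    Real.sin γ ≤ Real.sin x := by
  rcases le_total x (π / 2) with h | h
  · exact Real.sin_le_sin_of_le_of_le_pi_div_two (by linarith [Real.pi_pos]) h h2
  · rw [← Real.sin_pi_sub x]
    exact Real.sin_le_sin_of_le_of_le_pi_div_two (by linarith [Real.pi_pos]) (by linarith) (by linarith)

lemma core (γ : ℝ) (hγ1 : 0 < γ) (hγ2 : γ < π / 2) (h S : ℂ) (hh : h ≠ 0)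
    (hah : h.arg ∈ Set.Icc 0 (π - 2 * γ))
    (hS : 0 ≤ S.re * Real.sin γ + S.im * Real.cos γ) :
    ‖h‖ * Real.sin γ ≤ ‖h + S‖ ∧ |(h + S).arg| ≤ π - γ := by
  have hsγ : 0 < Real.sin γ := Real.sin_pos_of_pos_of_lt_pi hγ1 (by linarith [Real.pi_pos])
  have habsh : 0 < ‖h‖ := norm_pos_iff.mpr hh
  have hJh : ‖h‖ * Real.sin γ ≤ h.re * Real.sin γ + h.im * Real.cos γ := by
    rw [J_eq γ h hh]
    have := sin_ge_sin γ (h.arg + γ) hγ1 hγ2.le (by linarith [hah.1]) (by linarith [hah.2])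
    nlinarith
  have hw : ‖h‖ * Real.sin γ ≤ (h + S).re * Real.sin γ + (h + S).im * Real.cos γ := by
    simp only [Complex.add_re, Complex.add_im]
    nlinarith
  have hwpos : 0 < (h + S).re * Real.sin γ + (h + S).im * Real.cos γ := by
    nlinarith
  have hne : h + S ≠ 0 := by
    intro h0
    rw [h0] at hwpos
    simp at hwpos
  refine ⟨le_trans hw (J_le_abs γ _), ?_⟩
  -- arg bound
  rw [J_eq γ _ hne] at hwpos
  have habsw : 0 < ‖h + S‖ := norm_pos_iff.mpr hne
  have hsinpos : 0 < Real.sin ((h + S).arg + γ) := by nlinarith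
  by_contra hcon
  push_neg at hcon
  rw [lt_abs] at hcon
  have hlt := Complex.neg_pi_lt_arg (h + S)
  have hle := Complex.arg_le_pi (h + S)
  rcases hcon with hc | hc
  · -- arg > π - γ, so arg + γ ∈ (π, π + γ]
    have : Real.sin ((h + S).arg + γ) ≤ 0 := by
      have := Real.sin_nonneg_of_nonneg_of_le_pi (x := (h + S).arg + γ - π)
        (by linarith) (by linarith [Real.pi_pos])
      rw [show (h + S).arg + γ - π = -(π - ((h + S).arg + γ)) by ring, Real.sin_neg,
        Real.sin_pi_sub] at this
      linarith
    linarith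
  · -- -arg > π - γ : arg + γ ∈ (-π + γ, 2γ - π) ⊂ (-π, 0)
    have : Real.sin ((h + S).arg + γ) ≤ 0 := by
      have := Real.sin_nonneg_of_nonneg_of_le_pi (x := -((h + S).arg + γ))
        (by linarith) (by linarith)
      rw [Real.sin_neg] at this
      linarith
    linarith

lemma abs_arg_conj (z : ℂ) : |((starRingEnd ℂ) z).arg| = |z.arg| := by
  rw [Complex.arg_conj]
  split_ifs with h
  · rw [h]
  · rw [abs_neg]

lemma core' (γ : ℝ) (hγ1 : 0 < γ) (hγ2 : γ < π / 2) (h S : ℂ) (hh : h ≠ 0)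
    (hah : |h.arg| ≤ π - 2 * γ)
    (hS : |S.im| * Real.cos γ ≤ S.re * Real.sin γ) :
    h + S ≠ 0 ∧ ‖h‖ * Real.sin γ ≤ ‖h + S‖ ∧ |(h + S).arg| ≤ π - γ := by
  have hcγ : 0 ≤ Real.cos γ := Real.cos_nonneg_of_mem_Icc ⟨by linarith, hγ2.le⟩
  have hsγ : 0 < Real.sin γ := Real.sin_pos_of_pos_of_lt_pi hγ1 (by linarith [Real.pi_pos])
  have habsh : 0 < ‖h‖ := norm_pos_iff.mpr hh
  rw [abs_le] at hah
  rcases le_or_gt 0 h.arg with hc | hc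
  · have := core γ hγ1 hγ2 h S hh ⟨hc, hah.2⟩ (by
      have : -|S.im| ≤ S.im := neg_abs_le _
      nlinarith)
    refine ⟨fun h0 => by simp [h0, norm_pos_iff.mpr hh] at this; nlinarith [this.1], this⟩
  · -- conjugate case
    have hconj : (starRingEnd ℂ) h ≠ 0 := by simpa using hh
    have hargc : ((starRingEnd ℂ) h).arg = -h.arg := by
      rw [Complex.arg_conj, if_neg]
      intro hpi
      rw [hpi] at hc
      exact absurd hc (not_lt.2 Real.pi_pos.le)
    have := core γ hγ1 hγ2 ((starRingEnd ℂ) h) ((starRingEnd ℂ) S) hconj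
      (by rw [hargc]; exact ⟨by linarith, by linarith⟩)
      (by
        simp only [Complex.conj_re, Complex.conj_im]
        have : -|S.im| ≤ -S.im := by simpa using neg_abs_le (-S.im)
        nlinarith)
    rw [← map_add, Complex.norm_conj, Complex.norm_conj, abs_arg_conj] at this
    refine ⟨fun h0 => ?_, this⟩
    rw [h0] at this
    simp at this
    nlinarith [this.1]

/-- Lemma A.1: the approximate flow `g̃ n = g₀ / (1 + g₀ n Aₙ)` stays in a slightly
larger sector. -/
theorem stmt_0 (δ a c0 : ℝ) (hδ : δ ∈ Set.Ioo 0 (π / 2)) (ha : 0 < a) (hc0 : 0 ≤ c0) :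
    ∃ ε₀ > (0 : ℝ), ∀ ε : ℝ, 0 < ε → ε ≤ ε₀ → c0 * ε ≤ a / 2 →
      ∀ g₀ : ℂ, ‖g₀‖ < ε → |g₀.arg| ≤ π - δ →
      ∀ aseq : ℕ → ℂ, (∀ n, ‖aseq n - (a : ℂ)‖ ≤ c0 * ‖g₀‖) →
      ∀ n : ℕ,
        (1 + g₀ * (n : ℂ) * ((∑ k ∈ Finset.range n, aseq k) / (n : ℂ)) ≠ 0) ∧
        ‖g₀ / (1 + g₀ * (n : ℂ) * ((∑ k ∈ Finset.range n, aseq k) / (n : ℂ)))‖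
          ≤ 2 * ε / Real.sin δ ∧
        |(g₀ / (1 + g₀ * (n : ℂ) * ((∑ k ∈ Finset.range n, aseq k) / (n : ℂ)))).arg|
          ≤ π - δ / 2 := by
  obtain ⟨hδ0, hδπ⟩ := hδ
  have hπ := Real.pi_pos
  set γ := δ / 2 with hγdef
  have hγ1 : 0 < γ := by positivity
  have hγ2 : γ < π / 2 := by simp only [hγdef]; linarith
  have hsγ : 0 < Real.sin γ := Real.sin_pos_of_pos_of_lt_pi hγ1 (by linarith)
  have hcγ : 0 ≤ Real.cos γ := Real.cos_nonneg_of_mem_Icc ⟨by linarith, hγ2.le⟩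
  have hsγ1 : Real.sin γ ≤ 1 := Real.sin_le_one γ
  have hcγ1 : Real.cos γ ≤ 1 := Real.cos_le_one γ
  have hsδ : 0 < Real.sin δ := Real.sin_pos_of_pos_of_lt_pi hδ0 (by linarith)
  have hsδ2 : Real.sin δ ≤ 2 * Real.sin γ := by
    have : Real.sin δ = 2 * Real.sin γ * Real.cos γ := by
      rw [hγdef, ← Real.sin_two_mul]; ring_nf
    nlinarith
  refine ⟨a * Real.sin γ / (2 * (c0 + 1)), by positivity, ?_⟩
  intro ε hε hεε₀ hc0ε g₀ hg₀ harg aseq haseq n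
  have hεbound : c0 * ε ≤ a * Real.sin γ / 2 := by
    have h1 : c0 * ε ≤ c0 * (a * Real.sin γ / (2 * (c0 + 1))) :=
      mul_le_mul_of_nonneg_left hεε₀ hc0
    have h2 : c0 / (c0 + 1) ≤ 1 := by
      rw [div_le_one (by linarith)]; linarith
    have h3 : c0 * (a * Real.sin γ / (2 * (c0 + 1))) ≤ a * Real.sin γ / 2 := by
      rw [show c0 * (a * Real.sin γ / (2 * (c0 + 1))) = c0 * (a * Real.sin γ) / (2 * (c0 + 1)) by ring,
        div_le_div_iff₀ (by positivity) two_pos]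
      nlinarith
    linarith
  by_cases hg0 : g₀ = 0
  · subst hg0
    refine ⟨by simp, by simp; positivity, by simp; linarith⟩
  -- main case
  set S : ℂ := ∑ k ∈ Finset.range n, aseq k with hSdef
  have hrw : g₀ * (n : ℂ) * (S / (n : ℂ)) = g₀ * S := by
    rcases Nat.eq_zero_or_pos n with h0 | hpos
    · subst h0; simp [hSdef]
    · have : (n : ℂ) ≠ 0 := Nat.cast_ne_zero.mpr hpos.ne'
      field_simp
  rw [hrw]
  -- bound on S
  have hE : ‖S - (n : ℂ) * (a : ℂ)‖ ≤ n * (c0 * ‖g₀‖) := by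
    have : S - (n : ℂ) * (a : ℂ) = ∑ k ∈ Finset.range n, (aseq k - (a : ℂ)) := by
      rw [Finset.sum_sub_distrib]
      simp [hSdef, mul_comm]
    rw [this]
    calc ‖∑ k ∈ Finset.range n, (aseq k - (a : ℂ))‖
        ≤ ∑ k ∈ Finset.range n, ‖aseq k - (a : ℂ)‖ := by
          exact norm_sum_le _ _
      _ ≤ ∑ _k ∈ Finset.range n, c0 * ‖g₀‖ :=
          Finset.sum_le_sum fun k _ => haseq k
      _ = n * (c0 * ‖g₀‖) := by simp [mul_comm]
  have hEb : ‖S - (n : ℂ) * (a : ℂ)‖ ≤ n * (a * Real.sin γ / 2) := by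
    refine hE.trans ?_
    have : c0 * ‖g₀‖ ≤ a * Real.sin γ / 2 := by
      have := mul_le_mul_of_nonneg_left hg₀.le hc0
      linarith [hεbound, this]
    exact mul_le_mul_of_nonneg_left this (Nat.cast_nonneg n)
  have hSre : (n : ℝ) * a - n * (a * Real.sin γ / 2) ≤ S.re := by
    have h1 : |(S - (n : ℂ) * (a : ℂ)).re| ≤ n * (a * Real.sin γ / 2) :=
      le_trans (Complex.abs_re_le_norm _) hEb
    have h2 : (S - (n : ℂ) * (a : ℂ)).re = S.re - n * a := by
      simp [Complex.sub_re, Complex.mul_re]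
    rw [h2, abs_le] at h1
    linarith [h1.1]
  have hSim : |S.im| ≤ n * (a * Real.sin γ / 2) := by
    have h1 : |(S - (n : ℂ) * (a : ℂ)).im| ≤ n * (a * Real.sin γ / 2) :=
      le_trans (Complex.abs_im_le_norm _) hEb
    have h2 : (S - (n : ℂ) * (a : ℂ)).im = S.im := by
      simp [Complex.sub_im, Complex.mul_im]
    rwa [h2] at h1
  have hScond : |S.im| * Real.cos γ ≤ S.re * Real.sin γ := by
    have hn0 : (0:ℝ) ≤ (n:ℝ) := Nat.cast_nonneg n
    nlinarith [abs_nonneg S.im]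
  -- apply core'
  have hargpi : g₀.arg ≠ π := by
    intro h
    rw [h] at harg
    rw [abs_of_pos hπ] at harg
    linarith
  have hinv_arg : |(g₀⁻¹).arg| ≤ π - 2 * γ := by
    rw [Complex.abs_arg_inv, show π - 2 * γ = π - δ by rw [hγdef]; ring]
    exact harg
  have hinv0 : g₀⁻¹ ≠ 0 := inv_ne_zero hg0
  obtain ⟨hne, habs, hargb⟩ := core' γ hγ1 hγ2 g₀⁻¹ S hinv0 hinv_arg hScond
  have hdenom : 1 + g₀ * S = g₀ * (g₀⁻¹ + S) := by
    field_simp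
  have hdne : 1 + g₀ * S ≠ 0 := by
    rw [hdenom]
    exact mul_ne_zero hg0 hne
  have hquot : g₀ / (1 + g₀ * S) = (g₀⁻¹ + S)⁻¹ := by
    rw [hdenom]
    field_simp
  refine ⟨hdne, ?_, ?_⟩
  · rw [hquot, norm_inv]
    have habsg : 0 < ‖g₀‖ := norm_pos_iff.mpr hg0
    have h1 : ‖g₀⁻¹‖ * Real.sin γ ≤ ‖g₀⁻¹ + S‖ := habs
    rw [norm_inv] at h1
    have h2 : 0 < ‖g₀⁻¹ + S‖ := norm_pos_iff.mpr hne
    rw [inv_le_comm₀ h2 (by positivity)]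
    calc (2 * ε / Real.sin δ)⁻¹ = Real.sin δ / (2 * ε) := by rw [inv_div]
      _ ≤ 2 * Real.sin γ / (2 * ε) := by
          apply div_le_div_of_nonneg_right hsδ2 (by positivity)
      _ = Real.sin γ / ε := by ring
      _ ≤ Real.sin γ / ‖g₀‖ := by
          apply div_le_div_of_nonneg_left hsγ.le habsg hg₀.le
      _ = (‖g₀‖)⁻¹ * Real.sin γ := by rw [div_eq_mul_inv]; ring
      _ ≤ ‖g₀⁻¹ + S‖ := h1
  · rw [hquot, Complex.abs_arg_inv]
    simpa [hγdef] using hargb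
end

section
/- Let $a>0$, $g_0>0$, and define $I_n = \int_0^n \frac{g_0}{1+g_0\int_0^s a(t)\,dt}\,ds$ where $a:[0,\infty)\to\mathbb{R}$ is measurable with $a(s) = a + \lambda r(s)$, $|r(s)|\le C$, and $\lambda$ small enough that $a(s)\ge a/2$. Then $\left| I_n - \frac{1}{a}\log(1+a g_0 n)\right| \le \frac{4C\lambda}{a^2}\log(1+a g_0 n)$ for all $n\ge 0$. -/
open Real MeasureTheory intervalIntegral

/-- Lemma 2.6 main computation: comparison of the perturbed logarithmic integral
`Iₙ = ∫₀ⁿ g₀/(1 + g₀ ∫₀ˢ a(t) dt) ds` with `(1/a) log(1 + a g₀ n)`. -/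
theorem stmt_4 (a g₀ C lam : ℝ) (ha : 0 < a) (hg₀ : 0 < g₀) (hC : 0 ≤ C) (hlam : 0 ≤ lam)
    (af r : ℝ → ℝ) (hmeas : Measurable af)
    (hform : ∀ s, 0 ≤ s → af s = a + lam * r s)
    (hr : ∀ s, 0 ≤ s → |r s| ≤ C)
    (hlow : ∀ s, 0 ≤ s → a / 2 ≤ af s) :
    ∀ n : ℝ, 0 ≤ n →
      |(∫ s in (0:ℝ)..n, g₀ / (1 + g₀ * ∫ t in (0:ℝ)..s, af t))
          - (1 / a) * Real.log (1 + a * g₀ * n)|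
        ≤ (4 * C * lam / a ^ 2) * Real.log (1 + a * g₀ * n) := by
  intro n hn
  -- boundedness of af on [0,∞)
  have hbd : ∀ t : ℝ, 0 ≤ t → |af t| ≤ a + lam * C := by
    intro t ht
    rw [hform t ht]
    calc |a + lam * r t| ≤ |a| + |lam * r t| := abs_add_le _ _
      _ ≤ a + lam * C := by
          rw [abs_of_pos ha, abs_mul, abs_of_nonneg hlam]
          have := hr t ht
          nlinarith [abs_nonneg (r t)]
  -- integrability of af on subintervals of [0,n]
  have hintIcc : IntegrableOn af (Set.Icc 0 n) := by
    refine Integrable.mono' (g := fun _ => a + lam * C)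
      (integrableOn_const measure_Icc_lt_top.ne) hmeas.aestronglyMeasurable.restrict ?_
    filter_upwards [ae_restrict_mem measurableSet_Icc] with t ht
    exact hbd t ht.1
  have hintsub : ∀ x ∈ Set.Icc (0:ℝ) n, IntervalIntegrable af volume 0 x := by
    intro x hx
    rw [intervalIntegrable_iff_integrableOn_Icc_of_le hx.1]
    exact hintIcc.mono_set (Set.Icc_subset_Icc le_rfl hx.2)
  set A : ℝ → ℝ := fun s => ∫ t in (0:ℝ)..s, af t with hAdef
  have hAlow : ∀ s ∈ Set.Icc (0:ℝ) n, a / 2 * s ≤ A s := by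
    intro s hs
    have h1 : (∫ _t in (0:ℝ)..s, (a/2 : ℝ)) ≤ ∫ t in (0:ℝ)..s, af t :=
      intervalIntegral.integral_mono_on hs.1 intervalIntegrable_const (hintsub s hs)
        (fun t ht => hlow t ht.1)
    have h2 : (∫ _t in (0:ℝ)..s, (a/2 : ℝ)) = a / 2 * s := by simp; ring
    rw [h2] at h1
    exact h1
  have hAdiff : ∀ s ∈ Set.Icc (0:ℝ) n, |A s - a * s| ≤ lam * C * s := by
    intro s hs
    have heq : A s - a * s = ∫ t in (0:ℝ)..s, (af t - a) := by
      rw [intervalIntegral.integral_sub (hintsub s hs) intervalIntegrable_const]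
      simp [hAdef, mul_comm]
    rw [heq]
    have hb : ∀ t ∈ Set.uIoc (0:ℝ) s, ‖af t - a‖ ≤ lam * C := by
      intro t ht
      rw [Set.uIoc_of_le hs.1] at ht
      rw [hform t ht.1.le]
      have := hr t ht.1.le
      simp only [add_sub_cancel_left, Real.norm_eq_abs, abs_mul, abs_of_nonneg hlam]
      nlinarith [abs_nonneg (r t)]
    calc |∫ t in (0:ℝ)..s, (af t - a)| ≤ lam * C * |s - 0| :=
          intervalIntegral.norm_integral_le_of_norm_le_const hb
      _ = lam * C * s := by rw [sub_zero, abs_of_nonneg hs.1]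
  have hAcont : ContinuousOn A (Set.Icc 0 n) := by
    have := continuousOn_primitive_interval (a := (0:ℝ)) (b := n) (f := af) (μ := volume) ?_
    · rwa [Set.uIcc_of_le hn] at this
    · rwa [Set.uIcc_of_le hn]
  have hden : ∀ s : ℝ, 0 ≤ s → (0:ℝ) < 1 + a * g₀ * s := by
    intro s hs
    have : 0 ≤ a * g₀ * s := by positivity
    linarith
  have hdenf : ∀ s ∈ Set.Icc (0:ℝ) n, (0:ℝ) < 1 + g₀ * A s := by
    intro s hs
    have h1 := hAlow s hs
    have h2 : 0 ≤ a / 2 * s := mul_nonneg (by positivity) hs.1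
    nlinarith [mul_nonneg hg₀.le (le_trans h2 h1)]
  -- FTC for the unperturbed integral
  have hHderiv : ∀ s ∈ Set.uIcc (0:ℝ) n,
      HasDerivAt (fun x => (1/a) * Real.log (1 + a * g₀ * x)) (g₀ / (1 + a * g₀ * s)) s := by
    intro s hs
    rw [Set.uIcc_of_le hn] at hs
    have h0 := hden s hs.1
    have hinner : HasDerivAt (fun x : ℝ => 1 + a * g₀ * x) (a * g₀) s := by
      simpa using ((hasDerivAt_id s).const_mul (a * g₀)).const_add 1
    have hlog := (Real.hasDerivAt_log h0.ne').comp s hinner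
    have := hlog.const_mul (1/a)
    refine this.congr_deriv ?_
    field_simp
  have hhint : IntervalIntegrable (fun s => g₀ / (1 + a * g₀ * s)) volume 0 n := by
    apply ContinuousOn.intervalIntegrable
    rw [Set.uIcc_of_le hn]
    exact continuousOn_const.div
      (continuousOn_const.add (continuousOn_const.mul (continuousOn_id)))
      (fun s hs => (hden s hs.1).ne')
  have hIh : (∫ s in (0:ℝ)..n, g₀ / (1 + a * g₀ * s))
      = (1/a) * Real.log (1 + a * g₀ * n) := by
    have := intervalIntegral.integral_eq_sub_of_hasDerivAt hHderiv hhint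
    simpa using this
  -- FTC for the majorant φ
  have hGderiv : ∀ s ∈ Set.uIcc (0:ℝ) n,
      HasDerivAt (fun x => (2 * lam * C / a ^ 2) * (Real.log (1 + a * g₀ * x) + (1 + a * g₀ * x)⁻¹))
        (2 * lam * C * g₀ ^ 2 * s / (1 + a * g₀ * s) ^ 2) s := by
    intro s hs
    rw [Set.uIcc_of_le hn] at hs
    have h0 := hden s hs.1
    have hinner : HasDerivAt (fun x : ℝ => 1 + a * g₀ * x) (a * g₀) s := by
      simpa using ((hasDerivAt_id s).const_mul (a * g₀)).const_add 1
    have hlog := (Real.hasDerivAt_log h0.ne').comp s hinner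
    have hinv := hinner.inv h0.ne'
    have := (hlog.add hinv).const_mul (2 * lam * C / a ^ 2)
    refine this.congr_deriv ?_
    field_simp
    ring
  have hφcont : ContinuousOn (fun s => 2 * lam * C * g₀ ^ 2 * s / (1 + a * g₀ * s) ^ 2) (Set.Icc 0 n) := by
    exact (continuousOn_const.mul continuousOn_id).div
      ((continuousOn_const.add (continuousOn_const.mul continuousOn_id)).pow 2)
      (fun s hs => pow_ne_zero 2 (hden s hs.1).ne')
  have hφint : IntervalIntegrable (fun s => 2 * lam * C * g₀ ^ 2 * s / (1 + a * g₀ * s) ^ 2) volume 0 n := by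
    apply ContinuousOn.intervalIntegrable
    rwa [Set.uIcc_of_le hn]
  have hIφ : (∫ s in (0:ℝ)..n, 2 * lam * C * g₀ ^ 2 * s / (1 + a * g₀ * s) ^ 2)
      ≤ (2 * lam * C / a ^ 2) * Real.log (1 + a * g₀ * n) := by
    have heq := intervalIntegral.integral_eq_sub_of_hasDerivAt hGderiv hφint
    rw [heq]
    have h0 := hden n hn
    have hinv : (1 + a * g₀ * n)⁻¹ ≤ 1 := by
      rw [inv_le_one_iff₀]; right
      have : 0 ≤ a * g₀ * n := by positivity
      linarith
    have hc : (0:ℝ) ≤ 2 * lam * C / a ^ 2 := by positivity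
    simp only [mul_zero, add_zero, Real.log_one, inv_one]
    nlinarith [mul_le_mul_of_nonneg_left hinv hc]
  -- pointwise bound
  have hpt : ∀ s ∈ Set.Icc (0:ℝ) n,
      |g₀ / (1 + g₀ * A s) - g₀ / (1 + a * g₀ * s)|
        ≤ 2 * lam * C * g₀ ^ 2 * s / (1 + a * g₀ * s) ^ 2 := by
    intro s hs
    have hdf := hdenf s hs
    have hdh := hden s hs.1
    have heq : g₀ / (1 + g₀ * A s) - g₀ / (1 + a * g₀ * s)
        = g₀ ^ 2 * (a * s - A s) / ((1 + g₀ * A s) * (1 + a * g₀ * s)) := by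
      rw [div_sub_div _ _ hdf.ne' hdh.ne']
      ring
    rw [heq, abs_div, abs_of_pos (mul_pos hdf hdh)]
    have h1 : |g₀ ^ 2 * (a * s - A s)| ≤ g₀ ^ 2 * (lam * C * s) := by
      rw [abs_mul, abs_of_pos (by positivity : (0:ℝ) < g₀ ^ 2), abs_sub_comm]
      exact mul_le_mul_of_nonneg_left (hAdiff s hs) (by positivity)
    have h2 : (1 + a * g₀ * s) ^ 2 / 2 ≤ (1 + g₀ * A s) * (1 + a * g₀ * s) := by
      have := hAlow s hs
      have h3 : 0 ≤ g₀ * A s - a * g₀ * s / 2 := by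
        nlinarith [mul_le_mul_of_nonneg_left this hg₀.le]
      nlinarith [mul_nonneg (hden s hs.1).le
        (by linarith : (0:ℝ) ≤ 1 + g₀ * A s - (1 + a * g₀ * s) / 2)]
    calc |g₀ ^ 2 * (a * s - A s)| / ((1 + g₀ * A s) * (1 + a * g₀ * s))
        ≤ (g₀ ^ 2 * (lam * C * s)) / ((1 + a * g₀ * s) ^ 2 / 2) :=
          div_le_div₀ (mul_nonneg (by positivity) (mul_nonneg (mul_nonneg hlam hC) hs.1))
            h1 (div_pos (pow_pos (hden s hs.1) 2) two_pos) h2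
      _ = 2 * lam * C * g₀ ^ 2 * s / (1 + a * g₀ * s) ^ 2 := by
          field_simp
  -- integrability of the perturbed integrand
  have hfcont : ContinuousOn (fun s => g₀ / (1 + g₀ * A s)) (Set.Icc 0 n) :=
    continuousOn_const.div (continuousOn_const.add (continuousOn_const.mul hAcont))
      (fun s hs => (hdenf s hs).ne')
  have hfint : IntervalIntegrable (fun s => g₀ / (1 + g₀ * A s)) volume 0 n := by
    apply ContinuousOn.intervalIntegrable
    rwa [Set.uIcc_of_le hn]
  -- combine
  have hsplit : (∫ s in (0:ℝ)..n, g₀ / (1 + g₀ * A s)) - (1/a) * Real.log (1 + a * g₀ * n)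
      = ∫ s in (0:ℝ)..n, (g₀ / (1 + g₀ * A s) - g₀ / (1 + a * g₀ * s)) := by
    rw [intervalIntegral.integral_sub hfint hhint, hIh]
  rw [hsplit]
  have habsint : IntervalIntegrable (fun s => |g₀ / (1 + g₀ * A s) - g₀ / (1 + a * g₀ * s)|) volume 0 n :=
    (hfint.sub hhint).abs
  calc |∫ s in (0:ℝ)..n, (g₀ / (1 + g₀ * A s) - g₀ / (1 + a * g₀ * s))|
      ≤ ∫ s in (0:ℝ)..n, |g₀ / (1 + g₀ * A s) - g₀ / (1 + a * g₀ * s)| :=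
        intervalIntegral.abs_integral_le_integral_abs hn
    _ ≤ ∫ s in (0:ℝ)..n, 2 * lam * C * g₀ ^ 2 * s / (1 + a * g₀ * s) ^ 2 :=
        intervalIntegral.integral_mono_on hn habsint hφint (fun s hs => hpt s hs)
    _ ≤ (2 * lam * C / a ^ 2) * Real.log (1 + a * g₀ * n) := hIφ
    _ ≤ (4 * C * lam / a ^ 2) * Real.log (1 + a * g₀ * n) := by
        have hL : 0 ≤ Real.log (1 + a * g₀ * n) := Real.log_nonneg (by
          have : 0 ≤ a * g₀ * n := by positivity
          linarith)
        have hcoef : 2 * lam * C / a ^ 2 ≤ 4 * C * lam / a ^ 2 := by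
          rw [div_le_div_iff₀ (by positivity) (by positivity)]
          nlinarith [mul_nonneg (mul_nonneg hlam hC) (sq_nonneg a)]
        exact mul_le_mul_of_nonneg_right hcoef hL
end
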